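/- Let m be a positive integer, F_1,...,F_m complex numbers, and G_1,...,G_m : ℝ → ℂ locally integrable functions. Then for all t ∈ ℝ, the product ∏_{r=1}^m (F_r + ∫_0^t G_r(t_r) dt_r) equals the sum over all decompositions S_1 ⊔ S_2 = {1,...,m} of (∏_{r∈S_1} F_r) · (∑_{r∈S_2} ∫_0^t G_r(τ_r) (∏_{r̃∈S_2\{r}} ∫_0^{τ_r} G_{r̃}(τ_{r̃}) dτ_{r̃}) dτ_r). -/

import Mathlib

open MeasureTheory

private lemma ibp_nonneg (t : ℝ) (ht : 0 ≤ t) (f g : ℝ → ℂ)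
    (hf : ∀ a b, IntervalIntegrable f volume a b)
    (hg : ∀ a b, IntervalIntegrable g volume a b) :
    (∫ τ in (0:ℝ)..t, f τ * ∫ σ in (0:ℝ)..τ, g σ)
      + (∫ τ in (0:ℝ)..t, g τ * ∫ σ in (0:ℝ)..τ, f σ)
    = (∫ τ in (0:ℝ)..t, f τ) * ∫ τ in (0:ℝ)..t, g τ := by
  have hfi : IntegrableOn f (Set.Ioc 0 t) volume := (hf 0 t).1
  have hgi : IntegrableOn g (Set.Ioc 0 t) volume := (hg 0 t).1
  set μ : Measure ℝ := volume.restrict (Set.Ioc (0:ℝ) t) with hμ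
  have hKint : Integrable (Function.uncurry fun τ σ : ℝ =>
      if σ ≤ τ then f τ * g σ else 0) (μ.prod μ) := by
    have h1 : Integrable (fun p : ℝ × ℝ => f p.1 * g p.2) (μ.prod μ) :=
      Integrable.mul_prod hfi hgi
    have h2 : MeasurableSet {p : ℝ × ℝ | p.2 ≤ p.1} :=
      measurableSet_le measurable_snd measurable_fst
    have h3 := h1.indicator h2
    have : ({p : ℝ × ℝ | p.2 ≤ p.1}.indicator fun p : ℝ × ℝ => f p.1 * g p.2)
        = (Function.uncurry fun τ σ : ℝ => if σ ≤ τ then f τ * g σ else 0) := by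
      funext p
      simp [Set.indicator_apply, Function.uncurry]
    rwa [this] at h3
  have inner1 : ∀ τ ∈ Set.Ioc (0:ℝ) t,
      (∫ σ, (if σ ≤ τ then f τ * g σ else 0) ∂μ) = f τ * ∫ σ in (0:ℝ)..τ, g σ := by
    intro τ hτ
    have hfun : (fun σ => if σ ≤ τ then f τ * g σ else 0)
        = (Set.Iic τ).indicator (fun σ => f τ * g σ) := by
      funext σ; simp [Set.indicator_apply]
    rw [hfun, integral_indicator measurableSet_Iic, hμ,
      Measure.restrict_restrict measurableSet_Iic]
    have hset : Set.Iic τ ∩ Set.Ioc 0 t = Set.Ioc 0 τ := by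
      ext σ
      simp only [Set.mem_inter_iff, Set.mem_Iic, Set.mem_Ioc]
      constructor
      · rintro ⟨h1, h2, h3⟩; exact ⟨h2, h1⟩
      · rintro ⟨h1, h2⟩; exact ⟨h2, h1, h2.trans hτ.2⟩
    rw [hset, intervalIntegral.integral_of_le hτ.1.le, integral_const_mul]
  have inner2 : ∀ σ ∈ Set.Ioc (0:ℝ) t,
      (∫ τ, (if σ ≤ τ then f τ * g σ else 0) ∂μ)
        = ((∫ τ in (0:ℝ)..t, f τ) - ∫ τ in (0:ℝ)..σ, f τ) * g σ := by
    intro σ hσ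
    have hfun : (fun τ => if σ ≤ τ then f τ * g σ else 0)
        = (Set.Ici σ).indicator (fun τ => f τ * g σ) := by
      funext τ; simp [Set.indicator_apply]
    rw [hfun, integral_indicator measurableSet_Ici, hμ,
      Measure.restrict_restrict measurableSet_Ici]
    have hset : Set.Ici σ ∩ Set.Ioc 0 t = Set.Icc σ t := by
      ext τ
      simp only [Set.mem_inter_iff, Set.mem_Ici, Set.mem_Ioc, Set.mem_Icc]
      constructor
      · rintro ⟨h1, h2, h3⟩; exact ⟨h1, h3⟩
      · rintro ⟨h1, h2⟩; exact ⟨h1, hσ.1.trans_le h1, h2⟩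
    rw [hset, MeasureTheory.integral_Icc_eq_integral_Ioc,
      ← intervalIntegral.integral_of_le hσ.2, intervalIntegral.integral_mul_const,
      intervalIntegral.integral_interval_sub_left (hf 0 t) (hf 0 σ)]
  have e1 : (∫ τ in (0:ℝ)..t, f τ * ∫ σ in (0:ℝ)..τ, g σ)
      = ∫ τ, (∫ σ, (if σ ≤ τ then f τ * g σ else 0) ∂μ) ∂μ := by
    rw [intervalIntegral.integral_of_le ht]
    exact (setIntegral_congr_fun measurableSet_Ioc fun τ hτ => (inner1 τ hτ).symm)
  have e2 : (∫ τ, (∫ σ, (if σ ≤ τ then f τ * g σ else 0) ∂μ) ∂μ)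
      = ∫ σ, (∫ τ, (if σ ≤ τ then f τ * g σ else 0) ∂μ) ∂μ :=
    integral_integral_swap hKint
  have hPc : Continuous fun σ : ℝ => ∫ τ in (0:ℝ)..σ, f τ :=
    intervalIntegral.continuous_primitive hf 0
  have int2 : Integrable (fun σ => (∫ τ in (0:ℝ)..σ, f τ) * g σ) μ := by
    rw [hμ]
    exact IntegrableOn.continuousOn_mul_of_subset hPc.continuousOn hgi
      isCompact_Icc measurableSet_Ioc Set.Ioc_subset_Icc_self
  have e3 : (∫ σ, (∫ τ, (if σ ≤ τ then f τ * g σ else 0) ∂μ) ∂μ)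
      = (∫ τ in (0:ℝ)..t, f τ) * (∫ τ in (0:ℝ)..t, g τ)
        - ∫ τ in (0:ℝ)..t, g τ * ∫ σ in (0:ℝ)..τ, f σ := by
    have h4 : (∫ σ, (∫ τ, (if σ ≤ τ then f τ * g σ else 0) ∂μ) ∂μ)
        = ∫ σ, (((∫ τ in (0:ℝ)..t, f τ) - ∫ τ in (0:ℝ)..σ, f τ) * g σ) ∂μ :=
      setIntegral_congr_fun measurableSet_Ioc inner2
    rw [h4]
    have h5 : ∀ σ : ℝ, ((∫ τ in (0:ℝ)..t, f τ) - ∫ τ in (0:ℝ)..σ, f τ) * g σ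
        = (∫ τ in (0:ℝ)..t, f τ) * g σ - (∫ τ in (0:ℝ)..σ, f τ) * g σ := by
      intro σ; ring
    simp only [h5]
    rw [integral_sub (hgi.const_mul _) int2, integral_const_mul,
      ← intervalIntegral.integral_of_le ht]
    congr 1
    rw [intervalIntegral.integral_of_le ht]
    exact setIntegral_congr_fun measurableSet_Ioc fun σ _ => mul_comm _ _
  rw [e1, e2, e3]
  ring

private lemma ibp (t : ℝ) (f g : ℝ → ℂ)
    (hf : ∀ a b, IntervalIntegrable f volume a b)
    (hg : ∀ a b, IntervalIntegrable g volume a b) :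
    (∫ τ in (0:ℝ)..t, f τ * ∫ σ in (0:ℝ)..τ, g σ)
      + (∫ τ in (0:ℝ)..t, g τ * ∫ σ in (0:ℝ)..τ, f σ)
    = (∫ τ in (0:ℝ)..t, f τ) * ∫ τ in (0:ℝ)..t, g τ := by
  rcases le_total 0 t with ht | ht
  · exact ibp_nonneg t ht f g hf hg
  · have hf' : ∀ a b, IntervalIntegrable (fun x => f (-x)) volume a b := by
      intro a b
      simpa using (IntervalIntegrable.iff_comp_neg).mp (hf (-a) (-b))
    have hg' : ∀ a b, IntervalIntegrable (fun x => g (-x)) volume a b := by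
      intro a b
      simpa using (IntervalIntegrable.iff_comp_neg).mp (hg (-a) (-b))
    have conv0 : ∀ u : ℝ → ℂ, (∫ τ in (0:ℝ)..(-t), u (-τ)) = -∫ τ in (0:ℝ)..t, u τ := by
      intro u
      rw [intervalIntegral.integral_comp_neg u, neg_zero, intervalIntegral.integral_symm, neg_neg]
    have convP : ∀ (u : ℝ → ℂ) (τ : ℝ), (∫ σ in (0:ℝ)..τ, u (-σ)) = -∫ σ in (0:ℝ)..(-τ), u σ := by
      intro u τ
      rw [intervalIntegral.integral_comp_neg u, neg_zero, intervalIntegral.integral_symm]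
    have conv1 : ∀ u v : ℝ → ℂ,
        (∫ τ in (0:ℝ)..(-t), u (-τ) * ∫ σ in (0:ℝ)..τ, v (-σ))
          = ∫ τ in (0:ℝ)..t, u τ * ∫ σ in (0:ℝ)..τ, v σ := by
      intro u v
      have step : (∫ τ in (0:ℝ)..(-t), u (-τ) * ∫ σ in (0:ℝ)..τ, v (-σ))
          = ∫ τ in (0:ℝ)..(-t), -((fun x => u x * ∫ σ in (0:ℝ)..x, v σ) (-τ)) := by
        apply intervalIntegral.integral_congr
        intro τ _
        simp only [convP v τ]
        ring
      rw [step, intervalIntegral.integral_neg,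
        intervalIntegral.integral_comp_neg (fun x => u x * ∫ σ in (0:ℝ)..x, v σ),
        neg_zero, intervalIntegral.integral_symm, neg_neg, neg_neg]
    have H := ibp_nonneg (-t) (by linarith) (fun x => f (-x)) (fun x => g (-x)) hf' hg'
    rw [conv1 f g, conv1 g f, conv0 f, conv0 g] at H
    rw [H]
    ring

private lemma iisum {ι : Type*} (s : Finset ι) (f : ι → ℝ → ℂ)
    (h : ∀ i ∈ s, ∀ a b : ℝ, IntervalIntegrable (f i) volume a b) (a b : ℝ) :
    IntervalIntegrable (fun τ => ∑ i ∈ s, f i τ) volume a b := by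
  classical
  induction s using Finset.cons_induction with
  | empty => simp [intervalIntegrable_const]
  | cons j s' hj IH =>
    simp only [Finset.sum_cons]
    exact (h j (Finset.mem_cons_self j s') a b).add
      (IH fun i hi => h i (Finset.mem_cons_of_mem hi))

set_option maxHeartbeats 1000000 in
/-- Lemma 2.5: product expansion over decompositions `S₁ ⊔ S₂ = {1,…,m}`. -/
theorem product_expansion_over_decompositions
    (m : ℕ) (hm : 0 < m) (F : Fin m → ℂ) (G : Fin m → ℝ → ℂ)
    (hG : ∀ r, LocallyIntegrable (G r) volume) (t : ℝ) :
    (∏ r : Fin m, (F r + ∫ τ in (0:ℝ)..t, G r τ)) =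
      ∑ S₂ ∈ (Finset.univ : Finset (Fin m)).powerset,
        (∏ r ∈ S₂ᶜ, F r) *
          (if S₂ = ∅ then 1 else
            ∑ r ∈ S₂, ∫ τ in (0:ℝ)..t,
              G r τ * ∏ r' ∈ S₂.erase r, ∫ σ in (0:ℝ)..τ, G r' σ) := by
  classical
  have hGi : ∀ (r : Fin m) (a b : ℝ), IntervalIntegrable (G r) volume a b := fun r a b =>
    ((hG r).integrableOn_isCompact isCompact_uIcc).intervalIntegrable
  have hprim : ∀ r : Fin m, Continuous fun τ : ℝ => ∫ σ in (0:ℝ)..τ, G r σ := fun r =>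
    intervalIntegral.continuous_primitive (hGi r) 0
  have hcontprod : ∀ s : Finset (Fin m), Continuous fun τ : ℝ => ∏ r' ∈ s, ∫ σ in (0:ℝ)..τ, G r' σ :=
    fun s => continuous_finset_prod s fun r _ => hprim r
  have hint : ∀ (r : Fin m) (c : ℝ → ℂ), Continuous c →
      ∀ a b : ℝ, IntervalIntegrable (fun τ => G r τ * c τ) volume a b := fun r c hc a b =>
    (hGi r a b).mul_continuousOn hc.continuousOn
  -- key product identity for nonempty sets
  have key : ∀ s : Finset (Fin m), s.Nonempty → ∀ t : ℝ,
      (∏ r ∈ s, ∫ τ in (0:ℝ)..t, G r τ)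
        = ∑ r ∈ s, ∫ τ in (0:ℝ)..t, G r τ * ∏ r' ∈ s.erase r, ∫ σ in (0:ℝ)..τ, G r' σ := by
    intro s hs
    induction hs using Finset.Nonempty.cons_induction with
    | singleton a =>
      intro t
      simp
    | cons a s' ha hs' IH =>
      intro t
      set g : ℝ → ℂ := fun τ =>
        ∑ r ∈ s', G r τ * ∏ r' ∈ s'.erase r, ∫ σ in (0:ℝ)..τ, G r' σ with hgdef
      have hgint : ∀ a b : ℝ, IntervalIntegrable g volume a b := by
        intro a b
        exact iisum s' _ (fun r hr => hint r _ (hcontprod _)) a b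
      have hP : ∀ τ : ℝ, (∫ σ in (0:ℝ)..τ, g σ) = ∏ r ∈ s', ∫ σ in (0:ℝ)..τ, G r σ := by
        intro τ
        rw [hgdef]
        rw [intervalIntegral.integral_finset_sum fun r hr => hint r _ (hcontprod _) 0 τ]
        exact (IH τ).symm
      have H := ibp t (G a) g (hGi a) hgint
      rw [Finset.prod_cons, Finset.sum_cons]
      have lhs_eq : (∫ τ in (0:ℝ)..t, G a τ) * ∏ r ∈ s', (∫ τ in (0:ℝ)..t, G r τ)
          = (∫ τ in (0:ℝ)..t, G a τ) * ∫ τ in (0:ℝ)..t, g τ := by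
        rw [hP t]
      rw [lhs_eq, ← H]
      congr 1
      · -- first term equals the `a` term
        rw [Finset.erase_cons]
        apply intervalIntegral.integral_congr
        intro τ _
        dsimp only
        rw [hP τ]
      · -- second term equals the sum over s'
        have expand : (∫ τ in (0:ℝ)..t, g τ * ∫ σ in (0:ℝ)..τ, G a σ)
            = ∑ r ∈ s', ∫ τ in (0:ℝ)..t,
                (G r τ * ∏ r' ∈ s'.erase r, ∫ σ in (0:ℝ)..τ, G r' σ)
                  * ∫ σ in (0:ℝ)..τ, G a σ := by
          rw [← intervalIntegral.integral_finset_sum fun r hr =>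
            (hint r _ (hcontprod _) 0 t).mul_continuousOn (hprim a).continuousOn]
          apply intervalIntegral.integral_congr
          intro τ _
          dsimp only
          rw [hgdef]
          dsimp only
          rw [Finset.sum_mul]
        rw [expand]
        apply Finset.sum_congr rfl
        intro r hr
        have hne : r ≠ a := fun h => ha (h ▸ hr)
        have herase := Finset.erase_cons_of_ne ha hne.symm
        apply intervalIntegral.integral_congr
        intro τ _
        dsimp only
        rw [herase, Finset.prod_cons]
        ring
  -- expand the product and reindex by complements
  rw [Finset.prod_add]
  refine Finset.sum_bij' (fun S _ => Sᶜ) (fun S _ => Sᶜ) ?_ ?_ ?_ ?_ ?_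
  · intro S hS; exact Finset.mem_powerset.mpr (Finset.subset_univ _)
  · intro S hS; exact Finset.mem_powerset.mpr (Finset.subset_univ _)
  · intro S hS; exact compl_compl S
  · intro S hS; exact compl_compl S
  · intro S hS
    have h1 : Finset.univ \ S = Sᶜ := (Finset.compl_eq_univ_sdiff S).symm
    have h2 : (Sᶜ)ᶜ = S := compl_compl S
    rw [h1, h2]
    congr 1
    by_cases hne : Sᶜ = (∅ : Finset (Fin m))
    · have hSu : S = Finset.univ := by simpa using congrArg compl hne
      rw [hne, if_pos rfl]
      simp
    · rw [if_neg hne]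
      exact key Sᶜ (Finset.nonempty_iff_ne_empty.mpr hne) t
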